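/- Let K₁, K₂ be positive definite Hermitian n×n matrices, k ∈ ℂⁿ, P > 0, and suppose (K₁⁻¹k)ᴴ K₂ (K₁⁻¹k) > P. Define g(λ) = ((K₁ + λK₂)⁻¹k)ᴴ K₂ ((K₁ + λK₂)⁻¹k) for λ ≥ 0. Then g is continuous and strictly decreasing on [0,∞) with g(0) > P and lim_{λ→∞} g(λ) = 0, so there exists a unique λ* > 0 with g(λ*) = P. -/

import Mathlib

open Matrix ComplexOrder

private lemma dot_shift {n : ℕ} {A : Matrix (Fin n) (Fin n) ℂ} (hA : A.IsHermitian)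
    (x y : Fin n → ℂ) : star x ⬝ᵥ (A *ᵥ y) = star (A *ᵥ x) ⬝ᵥ y := by
  rw [Matrix.dotProduct_mulVec, Matrix.star_mulVec, hA.eq]

private lemma Mpos {n : ℕ} {K₁ K₂ : Matrix (Fin n) (Fin n) ℂ} (hK₁ : K₁.PosDef) (hK₂ : K₂.PosDef)
    {l : ℝ} (hl : 0 ≤ l) : (K₁ + (l : ℂ) • K₂).PosDef := by
  refine hK₁.add_posSemidef (Matrix.PosSemidef.of_dotProduct_mulVec_nonneg ?_ fun x => ?_)
  · unfold Matrix.IsHermitian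
    rw [Matrix.conjTranspose_smul, hK₂.1.eq]
    simp [Complex.conj_ofReal]
  · rw [Matrix.smul_mulVec, dotProduct_smul, smul_eq_mul]
    exact mul_nonneg (by exact_mod_cast Complex.zero_le_real.mpr hl) (hK₂.posSemidef.dotProduct_mulVec_nonneg x)

private lemma Mdet {n : ℕ} {K₁ K₂ : Matrix (Fin n) (Fin n) ℂ} (hK₁ : K₁.PosDef) (hK₂ : K₂.PosDef)
    {l : ℝ} (hl : 0 ≤ l) : IsUnit (K₁ + (l : ℂ) • K₂).det :=
  (Mpos hK₁ hK₂ hl).det_pos.ne'.isUnit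

private lemma anti_step {n : ℕ} {K₁ K₂ : Matrix (Fin n) (Fin n) ℂ} (hK₁ : K₁.PosDef)
    (hK₂ : K₂.PosDef) {k : Fin n → ℂ} (hk : k ≠ 0) {a b : ℝ} (ha : 0 ≤ a) (hab : a < b) :
    (star ((K₁ + (b:ℂ) • K₂)⁻¹ *ᵥ k) ⬝ᵥ (K₂ *ᵥ ((K₁ + (b:ℂ) • K₂)⁻¹ *ᵥ k))).re <
    (star ((K₁ + (a:ℂ) • K₂)⁻¹ *ᵥ k) ⬝ᵥ (K₂ *ᵥ ((K₁ + (a:ℂ) • K₂)⁻¹ *ᵥ k))).re := by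
  have hb : 0 ≤ b := ha.trans hab.le
  set A := K₁ + (a:ℂ) • K₂ with hA
  set B := K₁ + (b:ℂ) • K₂ with hB
  have hApos : A.PosDef := Mpos hK₁ hK₂ ha
  have hBpos : B.PosDef := Mpos hK₁ hK₂ hb
  have hAdet : IsUnit A.det := Mdet hK₁ hK₂ ha
  have hBdet : IsUnit B.det := Mdet hK₁ hK₂ hb
  have hKdet : IsUnit K₂.det := hK₂.det_pos.ne'.isUnit
  set va := A⁻¹ *ᵥ k with hva
  set w := B⁻¹ *ᵥ (K₂ *ᵥ va) with hw
  have hBw : B *ᵥ w = K₂ *ᵥ va := by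
    rw [hw, Matrix.mulVec_mulVec, Matrix.mul_nonsing_inv _ hBdet, Matrix.one_mulVec]
  have hAva : A *ᵥ va = k := by
    rw [hva, Matrix.mulVec_mulVec, Matrix.mul_nonsing_inv _ hAdet, Matrix.one_mulVec]
  have hwne : w ≠ 0 := by
    intro h0
    have h1 : K₂ *ᵥ va = 0 := by rw [← hBw, h0, Matrix.mulVec_zero]
    have h2 : va = 0 := by
      have h3 := congrArg (fun x => K₂⁻¹ *ᵥ x) h1
      simpa [Matrix.mulVec_mulVec, Matrix.nonsing_inv_mul _ hKdet, Matrix.one_mulVec,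
        Matrix.mulVec_zero] using h3
    exact hk (by rw [← hAva, h2, Matrix.mulVec_zero])
  have hδ : (0:ℝ) < b - a := sub_pos.2 hab
  have hBA : B = A + ((b - a : ℝ) : ℂ) • K₂ := by
    rw [hA, hB, add_assoc, ← add_smul]
    push_cast
    ring_nf
  have hvb : B⁻¹ *ᵥ k = va - ((b - a : ℝ) : ℂ) • w := by
    have h3 : B *ᵥ (va - ((b - a : ℝ) : ℂ) • w) = k := by
      rw [Matrix.mulVec_sub, Matrix.mulVec_smul, hBw]
      rw [hBA, Matrix.add_mulVec, Matrix.smul_mulVec, hAva]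
      abel
    rw [← h3, Matrix.mulVec_mulVec, Matrix.nonsing_inv_mul _ hBdet, Matrix.one_mulVec]
  set c1 := star w ⬝ᵥ (K₁ *ᵥ w) with hc1
  set c2 := star w ⬝ᵥ (K₂ *ᵥ w) with hc2
  have hcB : star w ⬝ᵥ (B *ᵥ w) = c1 + (b:ℂ) * c2 := by
    rw [hB, Matrix.add_mulVec, Matrix.smul_mulVec, dotProduct_add,
      dotProduct_smul, smul_eq_mul]
  have h1 : star w ⬝ᵥ (K₂ *ᵥ va) = c1 + (b:ℂ) * c2 := by rw [← hBw, hcB]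
  have h2 : star va ⬝ᵥ (K₂ *ᵥ w) = c1 + (b:ℂ) * c2 := by
    rw [dot_shift hK₂.1, ← hBw, ← dot_shift hBpos.1, hcB]
  have key : star (B⁻¹ *ᵥ k) ⬝ᵥ (K₂ *ᵥ (B⁻¹ *ᵥ k))
      = star va ⬝ᵥ (K₂ *ᵥ va)
        - (((b - a) * 2 : ℝ) : ℂ) * c1 - (((b - a) * (a + b) : ℝ) : ℂ) * c2 := by
    rw [hvb]
    rw [show star (va - ((b - a : ℝ) : ℂ) • w) = star va - ((b - a : ℝ) : ℂ) • star w by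
      rw [star_sub, star_smul, RCLike.star_def, Complex.conj_ofReal]]
    rw [Matrix.mulVec_sub, Matrix.mulVec_smul, sub_dotProduct,
      dotProduct_sub, dotProduct_sub, smul_dotProduct,
      smul_dotProduct, dotProduct_smul, dotProduct_smul,
      smul_eq_mul, smul_eq_mul, smul_eq_mul, h1, h2]
    simp only [smul_eq_mul, ← hc1, ← hc2]
    push_cast
    ring
  have hc1re : 0 < c1.re := by
    have := hK₁.re_dotProduct_pos hwne
    simpa using this
  have hc2re : 0 < c2.re := by
    have := hK₂.re_dotProduct_pos hwne
    simpa using this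
  rw [key, Complex.sub_re, Complex.sub_re]
  simp only [Complex.mul_re, Complex.ofReal_re, Complex.ofReal_im, zero_mul, sub_zero]
  nlinarith [mul_pos hδ hc1re, mul_nonneg (mul_nonneg hδ.le (by linarith : (0:ℝ) ≤ a + b)) hc2re.le]

private lemma cont_g {n : ℕ} (K₁ K₂ : Matrix (Fin n) (Fin n) ℂ) (hK₁ : K₁.PosDef)
    (hK₂ : K₂.PosDef) (k : Fin n → ℂ) :
    ContinuousOn (fun l : ℝ =>
      (star ((K₁ + (l:ℂ) • K₂)⁻¹ *ᵥ k) ⬝ᵥ (K₂ *ᵥ ((K₁ + (l:ℂ) • K₂)⁻¹ *ᵥ k))).re)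
      (Set.Ici 0) := by
  have hM : Continuous (fun l : ℝ => K₁ + (l:ℂ) • K₂) :=
    continuous_const.add (Complex.continuous_ofReal.smul continuous_const)
  have hinv : ContinuousOn (fun l : ℝ => (K₁ + (l:ℂ) • K₂)⁻¹) (Set.Ici 0) := by
    intro l hl
    apply ContinuousAt.continuousWithinAt
    have hdet : (K₁ + (l:ℂ) • K₂).det ≠ 0 := (Mdet hK₁ hK₂ hl).ne_zero
    have hri : ContinuousAt (Ring.inverse : ℂ → ℂ) (K₁ + (l:ℂ) • K₂).det := by
      rw [Ring.inverse_eq_inv']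
      exact continuousAt_inv₀ hdet
    exact ContinuousAt.comp (continuousAt_matrix_inv (K₁ + (l:ℂ) • K₂) hri) hM.continuousAt
  have hF : Continuous (fun A : Matrix (Fin n) (Fin n) ℂ =>
      (star (A *ᵥ k) ⬝ᵥ (K₂ *ᵥ (A *ᵥ k))).re) := by
    have hAv : Continuous (fun A : Matrix (Fin n) (Fin n) ℂ => A *ᵥ k) :=
      continuous_id.matrix_mulVec continuous_const
    exact Complex.continuous_re.comp
      (hAv.star.dotProduct (continuous_const.matrix_mulVec hAv))
  exact hF.comp_continuousOn hinv

open scoped MatrixOrder in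
private lemma tendsto_g {n : ℕ} (K₁ K₂ : Matrix (Fin n) (Fin n) ℂ) (hK₁ : K₁.PosDef)
    (hK₂ : K₂.PosDef) (k : Fin n → ℂ) :
    Filter.Tendsto (fun l : ℝ =>
      (star ((K₁ + (l:ℂ) • K₂)⁻¹ *ᵥ k) ⬝ᵥ (K₂ *ᵥ ((K₁ + (l:ℂ) • K₂)⁻¹ *ᵥ k))).re)
      Filter.atTop (nhds 0) := by
  set S := CFC.sqrt K₁ with hSdef
  have hSps : S.PosSemidef := (CFC.sqrt_nonneg K₁).posSemidef
  have hS2 : S * S = K₁ := CFC.sqrt_mul_sqrt_self K₁ hK₁.posSemidef.nonneg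
  have hK₁det : IsUnit K₁.det := hK₁.det_pos.ne'.isUnit
  have hSdet : IsUnit S.det := by
    have h : IsUnit (S.det * S.det) := by rw [← Matrix.det_mul, hS2]; exact hK₁det
    exact isUnit_of_mul_isUnit_left h
  set u0 := S⁻¹ *ᵥ k with hu0
  set c := ‖(WithLp.equiv 2 (Fin n → ℂ)).symm u0‖ with hc
  have bound : ∀ l : ℝ, 1 ≤ l →
      (star ((K₁ + (l:ℂ) • K₂)⁻¹ *ᵥ k) ⬝ᵥ (K₂ *ᵥ ((K₁ + (l:ℂ) • K₂)⁻¹ *ᵥ k))).re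
        ≤ c ^ 2 / l := by
    intro l hl
    have hl0 : (0:ℝ) < l := lt_of_lt_of_le one_pos hl
    set M := K₁ + (l:ℂ) • K₂ with hMdef
    have hMdet : IsUnit M.det := Mdet hK₁ hK₂ hl0.le
    set v := M⁻¹ *ᵥ k with hv
    have hMv : M *ᵥ v = k := by
      rw [hv, Matrix.mulVec_mulVec, Matrix.mul_nonsing_inv _ hMdet, Matrix.one_mulVec]
    set u := S *ᵥ v with hu
    have hSu0 : S *ᵥ u0 = k := by
      rw [hu0, Matrix.mulVec_mulVec, Matrix.mul_nonsing_inv _ hSdet, Matrix.one_mulVec]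
    have r1 : star v ⬝ᵥ k = star u ⬝ᵥ u0 := by rw [hu, ← dot_shift hSps.1, hSu0]
    have r2 : star u ⬝ᵥ u = star v ⬝ᵥ (K₁ *ᵥ v) := by
      conv_lhs => rw [hu, ← dot_shift hSps.1, Matrix.mulVec_mulVec, hS2]
    have r3 : star v ⬝ᵥ k = star v ⬝ᵥ (K₁ *ᵥ v) + (l:ℂ) * (star v ⬝ᵥ (K₂ *ᵥ v)) := by
      conv_lhs => rw [← hMv]
      rw [hMdef, Matrix.add_mulVec, Matrix.smul_mulVec, dotProduct_add,
        dotProduct_smul, smul_eq_mul]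
    set eu := (WithLp.equiv 2 (Fin n → ℂ)).symm u with heu
    have hcs : (star u ⬝ᵥ u0).re ≤ ‖eu‖ * c := by
      calc (star u ⬝ᵥ u0).re ≤ ‖(star u ⬝ᵥ u0)‖ := Complex.re_le_norm _
        _ = ‖(inner ℂ eu ((WithLp.equiv 2 (Fin n → ℂ)).symm u0) : ℂ)‖ := by
            rw [heu, WithLp.equiv_symm_apply, EuclideanSpace.inner_toLp_toLp, dotProduct_comm]
        _ ≤ ‖eu‖ * c := norm_inner_le_norm _ _
    have hu2 : ‖eu‖ ^ 2 = (star u ⬝ᵥ u).re := by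
      have h := inner_self_eq_norm_sq (𝕜 := ℂ) eu
      rw [heu, WithLp.equiv_symm_apply, EuclideanSpace.inner_toLp_toLp] at h
      rw [heu, WithLp.equiv_symm_apply]
      simpa [dotProduct_comm] using h.symm
    have hq0 : 0 ≤ (star v ⬝ᵥ (K₂ *ᵥ v)).re := by
      have := hK₂.posSemidef.re_dotProduct_nonneg v
      simpa using this
    have e1 : (star v ⬝ᵥ k).re
        = (star v ⬝ᵥ (K₁ *ᵥ v)).re + l * (star v ⬝ᵥ (K₂ *ᵥ v)).re := by
      rw [r3]
      simp [Complex.add_re, Complex.mul_re]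
    have key : ‖eu‖ ^ 2 + l * (star v ⬝ᵥ (K₂ *ᵥ v)).re ≤ ‖eu‖ * c := by
      rw [hu2, r2, ← e1, r1]
      exact hcs
    rw [le_div_iff₀ hl0]
    nlinarith [sq_nonneg (‖eu‖ - c / 2), sq_nonneg c, norm_nonneg eu, hq0, hl0]
  have h0 : ∀ᶠ l : ℝ in Filter.atTop, (0:ℝ) ≤
      (star ((K₁ + (l:ℂ) • K₂)⁻¹ *ᵥ k) ⬝ᵥ (K₂ *ᵥ ((K₁ + (l:ℂ) • K₂)⁻¹ *ᵥ k))).re := by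
    filter_upwards [Filter.eventually_ge_atTop (0:ℝ)] with l _
    have := hK₂.posSemidef.re_dotProduct_nonneg ((K₁ + (l:ℂ) • K₂)⁻¹ *ᵥ k)
    simpa using this
  have h1 : ∀ᶠ l : ℝ in Filter.atTop,
      (star ((K₁ + (l:ℂ) • K₂)⁻¹ *ᵥ k) ⬝ᵥ (K₂ *ᵥ ((K₁ + (l:ℂ) • K₂)⁻¹ *ᵥ k))).re
        ≤ c ^ 2 / l := by
    filter_upwards [Filter.eventually_ge_atTop (1:ℝ)] with l hl using bound l hl
  exact tendsto_of_tendsto_of_tendsto_of_le_of_le' tendsto_const_nhds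
    (Filter.Tendsto.div_atTop tendsto_const_nhds Filter.tendsto_id) h0 h1


theorem stmt9 {n : ℕ} (K₁ K₂ : Matrix (Fin n) (Fin n) ℂ)
    (hK₁ : K₁.PosDef) (hK₂ : K₂.PosDef) (k : Fin n → ℂ) (P : ℝ) (hP : 0 < P)
    (hfeas : P < (star (K₁⁻¹ *ᵥ k) ⬝ᵥ (K₂ *ᵥ (K₁⁻¹ *ᵥ k))).re)
    (g : ℝ → ℝ)
    (hg : ∀ lam : ℝ, g lam =
      (star ((K₁ + (lam : ℂ) • K₂)⁻¹ *ᵥ k) ⬝ᵥ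
        (K₂ *ᵥ ((K₁ + (lam : ℂ) • K₂)⁻¹ *ᵥ k))).re) :
    ContinuousOn g (Set.Ici 0) ∧ StrictAntiOn g (Set.Ici 0) ∧ P < g 0 ∧
      Filter.Tendsto g Filter.atTop (nhds 0) ∧
      ∃! lam : ℝ, 0 < lam ∧ g lam = P := by
  have hk : k ≠ 0 := by
    intro h
    rw [h] at hfeas
    simp at hfeas
    linarith
  have hgfun : g = fun l : ℝ =>
      (star ((K₁ + (l:ℂ) • K₂)⁻¹ *ᵥ k) ⬝ᵥ (K₂ *ᵥ ((K₁ + (l:ℂ) • K₂)⁻¹ *ᵥ k))).re :=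
    funext hg
  have hcont : ContinuousOn g (Set.Ici 0) := by
    rw [hgfun]; exact cont_g K₁ K₂ hK₁ hK₂ k
  have hanti : StrictAntiOn g (Set.Ici 0) := by
    intro a ha b hb hab
    rw [hg a, hg b]
    exact anti_step hK₁ hK₂ hk ha hab
  have hg0 : P < g 0 := by
    have e0 : K₁ + ((0:ℝ):ℂ) • K₂ = K₁ := by simp
    rw [hg 0, e0]
    exact hfeas
  have htend : Filter.Tendsto g Filter.atTop (nhds 0) := by
    rw [hgfun]; exact tendsto_g K₁ K₂ hK₁ hK₂ k
  refine ⟨hcont, hanti, hg0, htend, ?_⟩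
  have hev : ∀ᶠ l : ℝ in Filter.atTop, g l < P := htend.eventually (gt_mem_nhds hP)
  obtain ⟨N, hNP, hN0⟩ := (hev.and (Filter.eventually_ge_atTop (0:ℝ))).exists
  have hsub : Set.Icc (0:ℝ) N ⊆ Set.Ici 0 := Set.Icc_subset_Ici_self
  have hmem : P ∈ Set.Icc (g N) (g 0) := ⟨hNP.le, hg0.le⟩
  obtain ⟨lam, hlam, hglam⟩ := intermediate_value_Icc' hN0 (hcont.mono hsub) hmem
  have hlampos : 0 < lam := by
    rcases eq_or_lt_of_le hlam.1 with h | h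
    · exfalso
      rw [← h] at hglam
      exact absurd hglam.symm hg0.ne
    · exact h
  refine ⟨lam, ⟨hlampos, hglam⟩, ?_⟩
  rintro y ⟨hy, hgy⟩
  exact hanti.injOn (Set.mem_Ici.mpr hy.le) (Set.mem_Ici.mpr hlampos.le)
    (by rw [hgy, hglam])
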